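/- Let (V, P) be a finite irreducible Markov chain with stationary distribution π, and let f : [0,1] → ℝ be nonnegative and satisfy 0 < f(a) ≤ f(1−a) for all a ∈ (0, 1/2]. Then every eigenvalue λ ∈ ℂ of P, regarded as a complex matrix, with λ ≠ 1 satisfies 1 − |λ| ≥ 1 − C_f, i.e. |λ| ≤ C_f. -/

import Mathlib

open scoped Classical

noncomputable section

namespace Stmt9

variable {V : Type*} [Fintype V]

/-- measure of a finite set of states under `pi`. -/
def meas (pi : V → ℝ) (A : Finset V) : ℝ := ∑ x ∈ A, pi x

/-- ergodic flow `Q(A,y) = ∑_{x∈A} π(x)P(x,y)` from a set to a point. -/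
def flowPt (P : V → V → ℝ) (pi : V → ℝ) (A : Finset V) (y : V) : ℝ :=
  ∑ x ∈ A, pi x * P x y

/-- the evolving set `A_u = {y : Q(A,y) ≥ u·π(y)}`. -/
def evolve (P : V → V → ℝ) (pi : V → ℝ) (A : Finset V) (u : ℝ) : Finset V :=
  Finset.univ.filter fun y => u * pi y ≤ flowPt P pi A y

/-- `f`-congestion of a set: `C_f(A) = (∫₀¹ f(π(A_u)) du)/f(π(A))`. -/
def fCong (f : ℝ → ℝ) (P : V → V → ℝ) (pi : V → ℝ) (A : Finset V) : ℝ :=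
  (∫ u in (0:ℝ)..1, f (meas pi (evolve P pi A u))) / f (meas pi A)

/-- `C_f = max{C_f(A) : A nonempty, π(A) ≤ 1/2}`. -/
def fCongMax (f : ℝ → ℝ) (P : V → V → ℝ) (pi : V → ℝ) : ℝ :=
  sSup {c | ∃ A : Finset V, A.Nonempty ∧ meas pi A ≤ 1 / 2 ∧ c = fCong f P pi A}

set_option linter.unusedSectionVars false

/-- the symmetrized version of `f`. -/
def fhat (f : ℝ → ℝ) (a : ℝ) : ℝ :=
  if a ≤ 0 ∨ 1 ≤ a then 0 else if a ≤ 1/2 then f a else f (1 - a)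

section fhat
variable {f : ℝ → ℝ} (hf : ∀ a : ℝ, 0 < a → a ≤ 1 / 2 → 0 < f a ∧ f a ≤ f (1 - a))

include hf in
lemma fhat_nonneg (a : ℝ) : 0 ≤ fhat f a := by
  unfold fhat; split_ifs with h1 h2
  · exact le_refl 0
  · push_neg at h1; exact (hf a h1.1 h2).1.le
  · push_neg at h1 h2
    exact le_of_lt (hf (1-a) (by linarith) (by linarith)).1

lemma fhat_symm (f : ℝ → ℝ) (a : ℝ) : fhat f (1 - a) = fhat f a := by
  unfold fhat
  obtain h1 | h1 := le_or_gt a 0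
  · rw [if_pos (Or.inl h1), if_pos (Or.inr (by linarith))]
  obtain h2 | h2 := le_or_gt 1 a
  · rw [if_pos (Or.inr h2), if_pos (Or.inl (by linarith))]
  have e1 : ¬(1 - a ≤ 0 ∨ 1 ≤ 1 - a) := by push_neg; exact ⟨by linarith, by linarith⟩
  have e2 : ¬(a ≤ 0 ∨ 1 ≤ a) := by push_neg; exact ⟨h1, h2⟩
  rw [if_neg e1, if_neg e2]
  rcases lt_trichotomy a (1/2) with h3 | h3 | h3
  · rw [if_neg (by linarith : ¬(1 - a ≤ 1/2)), if_pos h3.le, sub_sub_cancel]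
  · rw [if_pos (by linarith : 1 - a ≤ 1/2), if_pos (by linarith), show (1:ℝ) - a = a by linarith]
  · rw [if_pos (by linarith : 1 - a ≤ 1/2), if_neg (by linarith)]

include hf in
lemma fhat_pos {a : ℝ} (h0 : 0 < a) (h1 : a < 1) : 0 < fhat f a := by
  unfold fhat
  rw [if_neg (by push_neg; exact ⟨by linarith, by linarith⟩)]
  split_ifs with h2
  · exact (hf a h0 h2).1
  · exact (hf (1-a) (by linarith) (by linarith)).1

include hf in
lemma fhat_le_f (hf0 : ∀ a ∈ Set.Icc (0:ℝ) 1, 0 ≤ f a) {a : ℝ} (h0 : 0 ≤ a) (h1 : a ≤ 1) :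
    fhat f a ≤ f a := by
  unfold fhat
  split_ifs with h2 h3
  · rcases h2 with h2 | h2
    · have : a = 0 := le_antisymm h2 h0
      subst this; exact hf0 0 (by norm_num)
    · have : a = 1 := le_antisymm h1 h2
      subst this; exact hf0 1 (by norm_num)
  · exact le_refl _
  · push_neg at h2 h3
    have := (hf (1-a) (by linarith) (by linarith)).2
    rwa [sub_sub_cancel] at this

end fhat


open MeasureTheory

def qf (P : V → V → ℝ) (pi : V → ℝ) (A : Finset V) (y : V) : ℝ := flowPt P pi A y / pi y

def dweight (P : V → V → ℝ) (pi : V → ℝ) (A : Finset V) (T : Finset V) : ℝ :=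
  (volume ({u : ℝ | evolve P pi A u = T} ∩ Set.Ioc 0 1)).toReal

section basic
variable {P : V → V → ℝ} {pi : V → ℝ}

lemma meas_nonneg (hpi0 : ∀ x, 0 < pi x) (A : Finset V) : 0 ≤ meas pi A :=
  Finset.sum_nonneg fun x _ => (hpi0 x).le

lemma meas_le_one (hpi0 : ∀ x, 0 < pi x) (hpi1 : ∑ x, pi x = 1) (A : Finset V) :
    meas pi A ≤ 1 := by
  rw [← hpi1]
  exact Finset.sum_le_sum_of_subset_of_nonneg (Finset.subset_univ A) fun x _ _ => (hpi0 x).le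

lemma meas_univ (hpi1 : ∑ x, pi x = 1) : meas pi (Finset.univ : Finset V) = 1 := hpi1

lemma meas_pos (hpi0 : ∀ x, 0 < pi x) {A : Finset V} (hA : A.Nonempty) : 0 < meas pi A :=
  Finset.sum_pos (fun x _ => hpi0 x) hA

lemma meas_compl (hpi1 : ∑ x, pi x = 1) (A : Finset V) : meas pi Aᶜ = 1 - meas pi A := by
  have := Finset.sum_add_sum_compl A pi
  unfold meas; rw [hpi1] at this; linarith

lemma meas_lt_one (hpi0 : ∀ x, 0 < pi x) (hpi1 : ∑ x, pi x = 1) {A : Finset V}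
    (hA : A ≠ Finset.univ) : meas pi A < 1 := by
  have h : Aᶜ.Nonempty := by
    rw [← Finset.card_pos, Finset.card_compl]
    have := Finset.card_lt_card (Finset.ssubset_univ_iff.2 hA)
    rw [Finset.card_univ] at this
    omega
  have := meas_pos hpi0 h
  rw [meas_compl hpi1] at this; linarith

lemma flowPt_nonneg (hP0 : ∀ x y, 0 ≤ P x y) (hpi0 : ∀ x, 0 < pi x) (A : Finset V) (y : V) :
    0 ≤ flowPt P pi A y :=
  Finset.sum_nonneg fun x _ => mul_nonneg (hpi0 x).le (hP0 x y)

lemma flowPt_le_pi (hP0 : ∀ x y, 0 ≤ P x y) (hpi0 : ∀ x, 0 < pi x)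
    (hstat : ∀ y, ∑ x, pi x * P x y = pi y) (A : Finset V) (y : V) :
    flowPt P pi A y ≤ pi y := by
  rw [← hstat y]
  exact Finset.sum_le_sum_of_subset_of_nonneg (Finset.subset_univ A)
    fun x _ _ => mul_nonneg (hpi0 x).le (hP0 x y)

lemma qf_nonneg (hP0 : ∀ x y, 0 ≤ P x y) (hpi0 : ∀ x, 0 < pi x) (A : Finset V) (y : V) :
    0 ≤ qf P pi A y :=
  div_nonneg (flowPt_nonneg hP0 hpi0 A y) (hpi0 y).le

lemma qf_le_one (hP0 : ∀ x y, 0 ≤ P x y) (hpi0 : ∀ x, 0 < pi x)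
    (hstat : ∀ y, ∑ x, pi x * P x y = pi y) (A : Finset V) (y : V) :
    qf P pi A y ≤ 1 := by
  rw [qf, div_le_one (hpi0 y)]
  exact flowPt_le_pi hP0 hpi0 hstat A y

lemma mem_evolve_iff (hpi0 : ∀ x, 0 < pi x) {A : Finset V} {u : ℝ} {y : V} :
    y ∈ evolve P pi A u ↔ u ≤ qf P pi A y := by
  rw [evolve, Finset.mem_filter]
  simp only [Finset.mem_univ, true_and]
  rw [qf, le_div_iff₀ (hpi0 y)]

lemma measurableSet_evolveEq (hpi0 : ∀ x, 0 < pi x) (A T : Finset V) :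
    MeasurableSet {u : ℝ | evolve P pi A u = T} := by
  have heq : {u : ℝ | evolve P pi A u = T}
      = ⋂ y : V, {u : ℝ | (u ≤ qf P pi A y) ↔ (y ∈ T)} := by
    ext u
    simp only [Set.mem_setOf_eq, Set.mem_iInter, Finset.ext_iff, mem_evolve_iff hpi0]
  rw [heq]
  refine MeasurableSet.iInter fun y => ?_
  by_cases hy : y ∈ T
  · simp only [hy, iff_true]
    exact measurableSet_Iic
  · simp only [hy, iff_false]
    have : {u : ℝ | ¬ u ≤ qf P pi A y} = Set.Ioi (qf P pi A y) := by
      ext u; simp [not_le]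
    rw [this]
    exact measurableSet_Ioi


lemma evolve_fun_eq (A : Finset V) (G : Finset V → ℝ) :
    (fun u : ℝ => G (evolve P pi A u))
      = fun u : ℝ => ∑ T : Finset V, Set.indicator {u' : ℝ | evolve P pi A u' = T}
          (fun _ => G T) u := by
  funext u
  rw [Finset.sum_eq_single (evolve P pi A u)]
  · rw [Set.indicator_of_mem (by exact rfl)]
  · intro T _ hT
    apply Set.indicator_of_notMem
    intro h
    exact hT (show evolve P pi A u = T from h).symm
  · intro h; exact absurd (Finset.mem_univ _) h

lemma evolve_intervalIntegrable (hpi0 : ∀ x, 0 < pi x) (A : Finset V) (G : Finset V → ℝ) :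
    IntervalIntegrable (fun u : ℝ => G (evolve P pi A u)) volume 0 1 := by
  rw [evolve_fun_eq A G, intervalIntegrable_iff]
  apply MeasureTheory.integrable_finset_sum
  intro T _
  exact (MeasureTheory.integrableOn_const measure_Ioc_lt_top.ne).indicator
    (measurableSet_evolveEq hpi0 A T)

lemma integral_evolve (hpi0 : ∀ x, 0 < pi x) (A : Finset V) (G : Finset V → ℝ) :
    ∫ u in (0:ℝ)..1, G (evolve P pi A u) = ∑ T : Finset V, dweight P pi A T * G T := by
  rw [evolve_fun_eq A G]
  rw [intervalIntegral.integral_finset_sum]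
  · refine Finset.sum_congr rfl fun T _ => ?_
    rw [intervalIntegral.integral_of_le zero_le_one]
    rw [MeasureTheory.integral_indicator (measurableSet_evolveEq hpi0 A T)]
    rw [MeasureTheory.setIntegral_const]
    rw [measureReal_restrict_apply (measurableSet_evolveEq hpi0 A T)]
    rw [dweight]
    simp [mul_comm, Measure.real]
  · intro T _
    rw [intervalIntegrable_iff]
    exact (MeasureTheory.integrableOn_const measure_Ioc_lt_top.ne).indicator
      (measurableSet_evolveEq hpi0 A T)

lemma dweight_nonneg (A T : Finset V) : 0 ≤ dweight P pi A T := ENNReal.toReal_nonneg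

lemma intervalIntegrable_ite (c r : ℝ) :
    IntervalIntegrable (fun u : ℝ => if u ≤ c then r else 0) volume 0 1 := by
  have : (fun u : ℝ => if u ≤ c then r else 0)
      = Set.indicator (Set.Iic c) (fun _ => r) := by
    funext u
    by_cases h : u ≤ c
    · rw [if_pos h, Set.indicator_of_mem (Set.mem_Iic.2 h)]
    · rw [if_neg h, Set.indicator_of_notMem (fun hh => h (Set.mem_Iic.1 hh))]
  rw [this, intervalIntegrable_iff]
  exact (MeasureTheory.integrableOn_const measure_Ioc_lt_top.ne).indicator
    measurableSet_Iic

lemma integral_ite (c r : ℝ) (h0 : 0 ≤ c) (h1 : c ≤ 1) :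
    ∫ u in (0:ℝ)..1, (if u ≤ c then r else 0) = r * c := by
  have heq : (fun u : ℝ => if u ≤ c then r else 0)
      = Set.indicator (Set.Iic c) (fun _ => r) := by
    funext u
    by_cases h : u ≤ c
    · rw [if_pos h, Set.indicator_of_mem (Set.mem_Iic.2 h)]
    · rw [if_neg h, Set.indicator_of_notMem (fun hh => h (Set.mem_Iic.1 hh))]
  rw [show (∫ u in (0:ℝ)..1, (if u ≤ c then r else 0))
      = ∫ u in (0:ℝ)..1, Set.indicator (Set.Iic c) (fun _ => r) u by rw [← heq]]
  rw [intervalIntegral.integral_of_le zero_le_one,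
    MeasureTheory.integral_indicator measurableSet_Iic, MeasureTheory.setIntegral_const,
    measureReal_restrict_apply measurableSet_Iic]
  have : Set.Iic c ∩ Set.Ioc 0 1 = Set.Ioc 0 c := by
    ext u
    simp only [Set.mem_inter_iff, Set.mem_Iic, Set.mem_Ioc]
    constructor
    · rintro ⟨h1', h2', _⟩; exact ⟨h2', h1'⟩
    · rintro ⟨h1', h2'⟩; exact ⟨h2', h1', le_trans h2' h1⟩
  rw [this, measureReal_def, Real.volume_Ioc]
  simp [ENNReal.toReal_ofReal h0, mul_comm]

lemma integral_meas_evolve (hP0 : ∀ x y, 0 ≤ P x y) (hpi0 : ∀ x, 0 < pi x)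
    (hP1 : ∀ x, ∑ y, P x y = 1) (hstat : ∀ y, ∑ x, pi x * P x y = pi y) (A : Finset V) :
    ∫ u in (0:ℝ)..1, meas pi (evolve P pi A u) = meas pi A := by
  have hmeq : ∀ u : ℝ, meas pi (evolve P pi A u)
      = ∑ y : V, (if u ≤ qf P pi A y then pi y else 0) := by
    intro u
    rw [meas, evolve, Finset.sum_filter]
    refine Finset.sum_congr rfl fun y _ => ?_
    congr 1
    rw [eq_iff_iff, qf, le_div_iff₀ (hpi0 y)]
  rw [show (fun u : ℝ => meas pi (evolve P pi A u))
      = fun u : ℝ => ∑ y : V, (if u ≤ qf P pi A y then pi y else 0) from funext hmeq]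
  rw [intervalIntegral.integral_finset_sum (fun y _ => intervalIntegrable_ite _ _)]
  have : ∀ y : V, (∫ u in (0:ℝ)..1, (if u ≤ qf P pi A y then pi y else 0))
      = flowPt P pi A y := by
    intro y
    rw [integral_ite _ _ (qf_nonneg hP0 hpi0 A y) (qf_le_one hP0 hpi0 hstat A y), qf,
      mul_div_cancel₀ _ (ne_of_gt (hpi0 y))]
  rw [Finset.sum_congr rfl fun y _ => this y]
  unfold flowPt meas
  rw [Finset.sum_comm]
  refine Finset.sum_congr rfl fun x _ => ?_
  rw [← Finset.mul_sum, hP1, mul_one]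

lemma integral_ind_evolve (hP0 : ∀ x y, 0 ≤ P x y) (hpi0 : ∀ x, 0 < pi x)
    (hstat : ∀ y, ∑ x, pi x * P x y = pi y) (A : Finset V) (y : V) :
    ∫ u in (0:ℝ)..1, (if y ∈ evolve P pi A u then (1:ℝ) else 0) = qf P pi A y := by
  have : ∀ u : ℝ, (if y ∈ evolve P pi A u then (1:ℝ) else 0)
      = (if u ≤ qf P pi A y then (1:ℝ) else 0) := by
    intro u; congr 1
    rw [eq_iff_iff, mem_evolve_iff hpi0]
  rw [show (fun u : ℝ => if y ∈ evolve P pi A u then (1:ℝ) else 0)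
      = fun u : ℝ => (if u ≤ qf P pi A y then (1:ℝ) else 0) from funext this]
  rw [integral_ite _ _ (qf_nonneg hP0 hpi0 A y) (qf_le_one hP0 hpi0 hstat A y), one_mul]

end basic


section compl
variable {P : V → V → ℝ} {pi : V → ℝ} {f : ℝ → ℝ}

lemma flowPt_compl (hstat : ∀ y, ∑ x, pi x * P x y = pi y) (A : Finset V) (y : V) :
    flowPt P pi Aᶜ y = pi y - flowPt P pi A y := by
  have h := Finset.sum_add_sum_compl A (fun x => pi x * P x y)
  rw [hstat y] at h
  unfold flowPt
  linarith

lemma qf_compl (hpi0 : ∀ x, 0 < pi x) (hstat : ∀ y, ∑ x, pi x * P x y = pi y)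
    (A : Finset V) (y : V) : qf P pi Aᶜ y = 1 - qf P pi A y := by
  rw [qf, qf, flowPt_compl hstat, sub_div, div_self (ne_of_gt (hpi0 y))]

lemma evolve_compl (hpi0 : ∀ x, 0 < pi x) (hstat : ∀ y, ∑ x, pi x * P x y = pi y)
    (A : Finset V) {u : ℝ} (hu : ∀ y, qf P pi A y ≠ 1 - u) :
    evolve P pi Aᶜ u = (evolve P pi A (1 - u))ᶜ := by
  ext y
  rw [Finset.mem_compl, mem_evolve_iff hpi0, mem_evolve_iff hpi0, qf_compl hpi0 hstat]
  constructor
  · intro h h2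
    exact hu y (le_antisymm (by linarith) h2)
  · intro h
    have : qf P pi A y < 1 - u := lt_of_not_ge h
    linarith

lemma integral_fhat_compl (hP0 : ∀ x y, 0 ≤ P x y) (hpi0 : ∀ x, 0 < pi x)
    (hpi1 : ∑ x, pi x = 1) (hstat : ∀ y, ∑ x, pi x * P x y = pi y) (A : Finset V) :
    ∫ u in (0:ℝ)..1, fhat f (meas pi (evolve P pi Aᶜ u))
      = ∫ u in (0:ℝ)..1, fhat f (meas pi (evolve P pi A u)) := by
  have h1 : (∫ u in (0:ℝ)..1, fhat f (meas pi (evolve P pi A (1 - u))))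
      = ∫ u in (0:ℝ)..1, fhat f (meas pi (evolve P pi A u)) := by
    rw [intervalIntegral.integral_comp_sub_left
      (fun u => fhat f (meas pi (evolve P pi A u))) 1]
    norm_num
  rw [← h1]
  apply intervalIntegral.integral_congr_ae
  have hE : MeasureTheory.volume (Set.range (fun y : V => 1 - qf P pi A y)) = 0 :=
    (Set.finite_range _).measure_zero _
  filter_upwards [MeasureTheory.measure_eq_zero_iff_ae_notMem.mp hE] with u hu _
  have hne : ∀ y, qf P pi A y ≠ 1 - u := by
    intro y hy
    exact hu ⟨y, show (1:ℝ) - qf P pi A y = u by linarith⟩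
  rw [evolve_compl hpi0 hstat A hne, meas_compl hpi1, fhat_symm]

end compl

section contraction
variable {P : V → V → ℝ} {pi : V → ℝ} {f : ℝ → ℝ}

lemma bddAbove_congSet (hP0 : ∀ x y, 0 ≤ P x y) (hpi0 : ∀ x, 0 < pi x)
    (hpi1 : ∑ x, pi x = 1)
    (hf : ∀ a : ℝ, 0 < a → a ≤ 1 / 2 → 0 < f a ∧ f a ≤ f (1 - a)) :
    BddAbove {c | ∃ A : Finset V, A.Nonempty ∧ meas pi A ≤ 1 / 2 ∧ c = fCong f P pi A} := by
  classical
  set T0 : Finset (Finset V) :=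
    Finset.univ.filter (fun A : Finset V => A.Nonempty ∧ meas pi A ≤ 1/2) with hT0
  by_cases hT : T0.Nonempty
  · set K : ℝ := max ((Finset.univ : Finset (Finset V)).sup'
      ⟨∅, Finset.mem_univ ∅⟩ (fun T => f (meas pi T))) 0 with hK
    set m0 : ℝ := T0.inf' hT (fun A => f (meas pi A)) with hm0
    have hm0pos : 0 < m0 := by
      rw [hm0]
      apply Finset.lt_inf'_iff hT (f := fun A => f (meas pi A)) (a := 0) |>.mpr
      intro A hA
      rw [hT0, Finset.mem_filter] at hA
      exact (hf _ (meas_pos hpi0 hA.2.1) hA.2.2).1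
    refine ⟨K / m0, ?_⟩
    rintro c ⟨A, hne, hle, rfl⟩
    have hfA : 0 < f (meas pi A) := (hf _ (meas_pos hpi0 hne) hle).1
    have hm0A : m0 ≤ f (meas pi A) := by
      rw [hm0]
      apply Finset.inf'_le
      rw [hT0, Finset.mem_filter]
      exact ⟨Finset.mem_univ _, hne, hle⟩
    have hI : (∫ u in (0:ℝ)..1, f (meas pi (evolve P pi A u))) ≤ K := by
      calc (∫ u in (0:ℝ)..1, f (meas pi (evolve P pi A u)))
          ≤ ∫ _u in (0:ℝ)..1, K := by
            refine intervalIntegral.integral_mono_on zero_le_one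
              (evolve_intervalIntegrable hpi0 A (fun T => f (meas pi T)))
              intervalIntegrable_const ?_
            intro u _
            exact le_max_of_le_left
              (Finset.le_sup' (fun T => f (meas pi T)) (Finset.mem_univ (evolve P pi A u)))
        _ = K := by simp
    rw [fCong, div_le_div_iff₀ hfA hm0pos]
    calc (∫ u in (0:ℝ)..1, f (meas pi (evolve P pi A u))) * m0 ≤ K * m0 :=
          mul_le_mul_of_nonneg_right hI hm0pos.le
      _ ≤ K * f (meas pi A) := mul_le_mul_of_nonneg_left hm0A (le_max_right _ _)
  · refine ⟨0, ?_⟩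
    rintro c ⟨A, hne, hle, rfl⟩
    exact absurd ⟨A, by rw [hT0, Finset.mem_filter]; exact ⟨Finset.mem_univ _, hne, hle⟩⟩ hT

end contraction


section keycontraction
variable {P : V → V → ℝ} {pi : V → ℝ} {f : ℝ → ℝ}

lemma fhat_meas_eq (hpi0 : ∀ x, 0 < pi x) {B : Finset V} (hne : B.Nonempty)
    (hle : meas pi B ≤ 1/2) : fhat f (meas pi B) = f (meas pi B) := by
  have h0 := meas_pos hpi0 hne
  rw [fhat, if_neg (by push_neg; exact ⟨by linarith, by linarith⟩), if_pos hle]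

lemma key_contraction_small (hP0 : ∀ x y, 0 ≤ P x y) (hpi0 : ∀ x, 0 < pi x)
    (hpi1 : ∑ x, pi x = 1) (hstat : ∀ y, ∑ x, pi x * P x y = pi y)
    (hf0 : ∀ a ∈ Set.Icc (0:ℝ) 1, 0 ≤ f a)
    (hf : ∀ a : ℝ, 0 < a → a ≤ 1 / 2 → 0 < f a ∧ f a ≤ f (1 - a))
    {B : Finset V} (hne : B.Nonempty) (hle : meas pi B ≤ 1/2) :
    ∫ u in (0:ℝ)..1, fhat f (meas pi (evolve P pi B u))
      ≤ fCongMax f P pi * fhat f (meas pi B) := by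
  have hfB : 0 < f (meas pi B) := (hf _ (meas_pos hpi0 hne) hle).1
  have step1 : ∫ u in (0:ℝ)..1, fhat f (meas pi (evolve P pi B u))
      ≤ ∫ u in (0:ℝ)..1, f (meas pi (evolve P pi B u)) := by
    refine intervalIntegral.integral_mono_on zero_le_one
      (evolve_intervalIntegrable hpi0 B (fun T => fhat f (meas pi T)))
      (evolve_intervalIntegrable hpi0 B (fun T => f (meas pi T))) ?_
    intro u _
    exact fhat_le_f hf hf0 (meas_nonneg hpi0 _) (meas_le_one hpi0 hpi1 _)
  have step2 : (∫ u in (0:ℝ)..1, f (meas pi (evolve P pi B u)))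
      = fCong f P pi B * f (meas pi B) := by
    rw [fCong, div_mul_cancel₀ _ (ne_of_gt hfB)]
  have step3 : fCong f P pi B ≤ fCongMax f P pi := by
    apply le_csSup (bddAbove_congSet hP0 hpi0 hpi1 hf)
    exact ⟨B, hne, hle, rfl⟩
  rw [fhat_meas_eq hpi0 hne hle]
  calc (∫ u in (0:ℝ)..1, fhat f (meas pi (evolve P pi B u)))
      ≤ fCong f P pi B * f (meas pi B) := step1.trans step2.le
    _ ≤ fCongMax f P pi * f (meas pi B) := mul_le_mul_of_nonneg_right step3 hfB.le

lemma key_contraction (hP0 : ∀ x y, 0 ≤ P x y) (hpi0 : ∀ x, 0 < pi x)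
    (hpi1 : ∑ x, pi x = 1) (hstat : ∀ y, ∑ x, pi x * P x y = pi y)
    (hP1 : ∀ x, ∑ y, P x y = 1)
    (hf0 : ∀ a ∈ Set.Icc (0:ℝ) 1, 0 ≤ f a)
    (hf : ∀ a : ℝ, 0 < a → a ≤ 1 / 2 → 0 < f a ∧ f a ≤ f (1 - a))
    (B : Finset V) :
    ∫ u in (0:ℝ)..1, fhat f (meas pi (evolve P pi B u))
      ≤ fCongMax f P pi * fhat f (meas pi B) := by
  by_cases hB : B = ∅
  · subst hB
    have hm : meas pi (∅ : Finset V) = 0 := by simp [meas]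
    have hz : ∫ u in (0:ℝ)..1, fhat f (meas pi (evolve P pi (∅ : Finset V) u)) = 0 := by
      have hcg : (∫ u in (0:ℝ)..1, fhat f (meas pi (evolve P pi (∅ : Finset V) u)))
          = ∫ _u in (0:ℝ)..1, (0:ℝ) := by
        apply intervalIntegral.integral_congr_ae
        filter_upwards with u hu
        have hu0 : 0 < u := by
          rcases Set.mem_Ioc.mp (by rwa [Set.uIoc_of_le zero_le_one] at hu) with ⟨h1, _⟩
          exact h1
        have : evolve P pi (∅ : Finset V) u = ∅ := by
          apply Finset.eq_empty_of_forall_notMem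
          intro y hy
          rw [mem_evolve_iff hpi0] at hy
          have : qf P pi (∅ : Finset V) y = 0 := by simp [qf, flowPt]
          rw [this] at hy
          linarith
        rw [this, hm, fhat, if_pos (Or.inl le_rfl)]
      rw [hcg]; simp
    rw [hz, hm, fhat, if_pos (Or.inl le_rfl), mul_zero]
  · by_cases hBu : B = Finset.univ
    · subst hBu
      have hm : meas pi (Finset.univ : Finset V) = 1 := meas_univ hpi1
      have hz : ∫ u in (0:ℝ)..1,
          fhat f (meas pi (evolve P pi (Finset.univ : Finset V) u)) = 0 := by
        have hcg : (∫ u in (0:ℝ)..1,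
            fhat f (meas pi (evolve P pi (Finset.univ : Finset V) u)))
            = ∫ _u in (0:ℝ)..1, (0:ℝ) := by
          apply intervalIntegral.integral_congr_ae
          filter_upwards with u hu
          have hu1 : u ≤ 1 := by
            rcases Set.mem_Ioc.mp (by rwa [Set.uIoc_of_le zero_le_one] at hu) with ⟨_, h2⟩
            exact h2
          have : evolve P pi (Finset.univ : Finset V) u = Finset.univ := by
            apply Finset.eq_univ_of_forall
            intro y
            rw [mem_evolve_iff hpi0]
            have : qf P pi (Finset.univ : Finset V) y = 1 := by
              rw [qf, show flowPt P pi Finset.univ y = pi y from hstat y,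
                div_self (ne_of_gt (hpi0 y))]
            rw [this]; exact hu1
          rw [this, hm, fhat, if_pos (Or.inr le_rfl)]
        rw [hcg]; simp
      rw [hz, hm, fhat, if_pos (Or.inr le_rfl), mul_zero]
    · by_cases hle : meas pi B ≤ 1/2
      · exact key_contraction_small hP0 hpi0 hpi1 hstat hf0 hf
          (Finset.nonempty_of_ne_empty hB) hle
      · push_neg at hle
        have hcne : Bᶜ.Nonempty := by
          rw [← Finset.card_pos, Finset.card_compl]
          have := Finset.card_lt_card (Finset.ssubset_univ_iff.2 hBu)
          rw [Finset.card_univ] at this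
          omega
        have hcle : meas pi Bᶜ ≤ 1/2 := by
          rw [meas_compl hpi1]; linarith
        have h1 := key_contraction_small hP0 hpi0 hpi1 hstat hf0 hf hcne hcle
        have h2 := integral_fhat_compl (f := f) hP0 hpi0 hpi1 hstat B
        rw [h2] at h1
        have h3 : fhat f (meas pi Bᶜ) = fhat f (meas pi B) := by
          rw [meas_compl hpi1, fhat_symm]
        rwa [h3] at h1

end keycontraction


/-- centered indicator of a set. -/
def chi (pi : V → ℝ) (B : Finset V) (y : V) : ℝ := (if y ∈ B then 1 else 0) - meas pi B

/-- action of the time-reversed chain on functions. -/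
def Pact (P : V → V → ℝ) (pi : V → ℝ) (φ : V → ℝ) (y : V) : ℝ :=
  (∑ x, pi x * P x y * φ x) / pi y

section chi
variable {P : V → V → ℝ} {pi : V → ℝ} {f : ℝ → ℝ}

lemma chi_empty (y : V) : chi pi ∅ y = 0 := by simp [chi, meas]

lemma chi_univ (hpi1 : ∑ x, pi x = 1) (y : V) : chi pi Finset.univ y = 0 := by
  simp [chi, meas_univ hpi1]

lemma chi_le_one (hpi0 : ∀ x, 0 < pi x) (B : Finset V) (y : V) : chi pi B y ≤ 1 := by
  have h1 : (if y ∈ B then (1:ℝ) else 0) ≤ 1 := by split_ifs <;> norm_num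
  have h2 := meas_nonneg hpi0 B
  rw [chi]; linarith

lemma sum_pi_ite (B : Finset V) : ∑ y, pi y * (if y ∈ B then (1:ℝ) else 0) = meas pi B := by
  rw [meas]
  rw [Finset.sum_congr rfl (fun y _ => by rw [mul_ite, mul_one, mul_zero])]
  exact Finset.sum_ite_mem Finset.univ B pi ▸ by rw [Finset.univ_inter]

lemma chi_meanzero (hpi1 : ∑ x, pi x = 1) (B : Finset V) :
    ∑ y, pi y * chi pi B y = 0 := by
  have h : ∀ y, pi y * chi pi B y
      = pi y * (if y ∈ B then (1:ℝ) else 0) - meas pi B * pi y := by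
    intro y; rw [chi]; ring
  rw [Finset.sum_congr rfl (fun y _ => h y), Finset.sum_sub_distrib, sum_pi_ite,
    ← Finset.mul_sum, hpi1, mul_one, sub_self]

lemma Pact_chi (hpi0 : ∀ x, 0 < pi x) (hstat : ∀ y, ∑ x, pi x * P x y = pi y)
    (B : Finset V) (y : V) :
    Pact P pi (chi pi B) y = qf P pi B y - meas pi B := by
  unfold Pact chi qf
  have h1 : ∑ x, pi x * P x y * ((if x ∈ B then (1:ℝ) else 0) - meas pi B)
      = flowPt P pi B y - meas pi B * pi y := by
    rw [Finset.sum_congr rfl (fun x _ => by rw [mul_sub])]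
    rw [Finset.sum_sub_distrib]
    congr 1
    · rw [flowPt, Finset.sum_congr rfl
        (fun x _ => by rw [mul_ite, mul_one, mul_zero])]
      rw [← Finset.sum_filter]
      congr 1
      ext x
      simp
    · rw [Finset.sum_congr rfl (fun x _ => by rw [mul_comm]), ← Finset.mul_sum, hstat]
  rw [h1, sub_div, mul_div_assoc, div_self (ne_of_gt (hpi0 y)), mul_one]

lemma sum_dweight_chi (hP0 : ∀ x y, 0 ≤ P x y) (hpi0 : ∀ x, 0 < pi x)
    (hP1 : ∀ x, ∑ y, P x y = 1) (hstat : ∀ y, ∑ x, pi x * P x y = pi y)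
    (B : Finset V) (y : V) :
    ∑ T : Finset V, dweight P pi B T * chi pi T y = qf P pi B y - meas pi B := by
  have h0 : ∑ T : Finset V, dweight P pi B T * chi pi T y
      = ∫ u in (0:ℝ)..1, chi pi (evolve P pi B u) y :=
    (integral_evolve hpi0 B (fun T => chi pi T y)).symm
  rw [h0]
  have hsplit : (fun u : ℝ => chi pi (evolve P pi B u) y)
      = fun u : ℝ => (fun T => if y ∈ T then (1:ℝ) else 0) (evolve P pi B u)
        - (fun T => meas pi T) (evolve P pi B u) := by
    funext u; rw [chi]
  rw [hsplit, intervalIntegral.integral_sub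
    (evolve_intervalIntegrable hpi0 B (fun T => if y ∈ T then (1:ℝ) else 0))
    (evolve_intervalIntegrable hpi0 B (fun T => meas pi T))]
  rw [integral_ind_evolve hP0 hpi0 hstat B y, integral_meas_evolve hP0 hpi0 hP1 hstat B]

lemma sum_dweight_fhat (hpi0 : ∀ x, 0 < pi x) (B : Finset V) :
    ∑ T : Finset V, dweight P pi B T * fhat f (meas pi T)
      = ∫ u in (0:ℝ)..1, fhat f (meas pi (evolve P pi B u)) :=
  (integral_evolve hpi0 B (fun T => fhat f (meas pi T))).symm

end chi


section repexists
variable {P : V → V → ℝ} {pi : V → ℝ} {f : ℝ → ℝ}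

lemma fhat_zero : fhat f 0 = 0 := by rw [fhat, if_pos (Or.inl le_rfl)]

lemma rep_exists_aux [Nonempty V] (hpi1 : ∑ x, pi x = 1)
    {Fmax : ℝ} (hFmax : ∀ B : Finset V, fhat f (meas pi B) ≤ Fmax) :
    ∀ n : ℕ, ∀ φ : V → ℝ, (Finset.image φ Finset.univ).card ≤ n → (∑ y, pi y * φ y = 0) →
    ∃ c : Finset V → ℝ, (∀ B, 0 ≤ c B) ∧ (∀ y, φ y = ∑ B : Finset V, c B * chi pi B y) ∧
      ∑ B : Finset V, c B * fhat f (meas pi B)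
        ≤ Fmax * (Finset.univ.sup' Finset.univ_nonempty φ
          - Finset.univ.inf' Finset.univ_nonempty φ) := by
  have hFmax0 : 0 ≤ Fmax := by
    have h1 := hFmax ∅
    have h2 : meas pi (∅ : Finset V) = 0 := by simp [meas]
    rw [h2, fhat_zero] at h1
    exact h1
  intro n
  induction n with
  | zero =>
    intro φ hcard _
    exfalso
    have := Finset.card_pos.mpr (Finset.univ_nonempty.image φ)
    omega
  | succ n ih =>
    intro φ hcard hmz
    set m := Finset.univ.inf' Finset.univ_nonempty φ with hm
    set Mx := Finset.univ.sup' Finset.univ_nonempty φ with hMx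
    have hmle : ∀ y, m ≤ φ y := fun y => Finset.inf'_le _ (Finset.mem_univ y)
    have hMge : ∀ y, φ y ≤ Mx := fun y => Finset.le_sup' _ (Finset.mem_univ y)
    have hmM : m ≤ Mx := le_trans (hmle (Classical.arbitrary V)) (hMge _)
    by_cases hone : (Finset.image φ Finset.univ).card ≤ 1
    · have hconst : ∀ y, φ y = φ (Classical.arbitrary V) := by
        intro y
        exact Finset.card_le_one.mp hone _
          (Finset.mem_image_of_mem φ (Finset.mem_univ y)) _
          (Finset.mem_image_of_mem φ (Finset.mem_univ _))
      have hzero : φ (Classical.arbitrary V) = 0 := by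
        have h1 : ∑ y, pi y * φ y = φ (Classical.arbitrary V) * ∑ y, pi y := by
          rw [Finset.mul_sum]
          exact Finset.sum_congr rfl fun y _ => by rw [hconst y]; ring
        rw [hpi1, mul_one] at h1
        rw [← h1, hmz]
      refine ⟨fun _ => 0, fun B => le_rfl, ?_, ?_⟩
      · intro y; rw [hconst y, hzero]; simp
      · simp only [zero_mul, Finset.sum_const_zero]
        exact mul_nonneg hFmax0 (by linarith)
    · push_neg at hone
      set S := Finset.univ.filter (fun y => m < φ y) with hS
      obtain ⟨y₀, _, hy₀⟩ := Finset.exists_mem_eq_inf' Finset.univ_nonempty φ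
      have hy₀m : φ y₀ = m := hy₀.symm
      have hmmem : m ∈ Finset.image φ Finset.univ :=
        hy₀m ▸ Finset.mem_image_of_mem φ (Finset.mem_univ y₀)
      have hy₀S : y₀ ∉ S := by
        rw [hS, Finset.mem_filter]
        push_neg
        intro _
        rw [hy₀m]
      have hSne : S.Nonempty := by
        by_contra hSe
        rw [Finset.not_nonempty_iff_eq_empty] at hSe
        have hall : ∀ y, φ y = m := by
          intro y
          rcases eq_or_lt_of_le (hmle y) with h | h
          · exact h.symm
          · exfalso
            have : y ∈ S := by rw [hS, Finset.mem_filter]; exact ⟨Finset.mem_univ y, h⟩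
            rw [hSe] at this
            exact absurd this (Finset.notMem_empty y)
        have hsub : Finset.image φ Finset.univ ⊆ {m} := by
          intro v hv
          obtain ⟨y, _, rfl⟩ := Finset.mem_image.mp hv
          rw [hall y]; exact Finset.mem_singleton_self m
        have := Finset.card_le_card hsub
        rw [Finset.card_singleton] at this
        omega
      obtain ⟨y', hy'S, hy'⟩ := Finset.exists_mem_eq_inf' hSne φ
      set m' := S.inf' hSne φ with hm'
      have hy'gt : m < φ y' := (Finset.mem_filter.mp hy'S).2
      set t := m' - m with ht
      have htpos : 0 < t := by rw [ht, hy']; linarith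
      have hm'le : ∀ y ∈ S, m' ≤ φ y := fun y hy => Finset.inf'_le _ hy
      set ψ := fun y => φ y - t * chi pi S y with hψ
      have hψmem : ∀ y ∈ S, ψ y = φ y - t + t * meas pi S := by
        intro y hy
        rw [hψ]; simp only [chi, if_pos hy]; ring
      have hψnot : ∀ y ∉ S, ψ y = m + t * meas pi S := by
        intro y hy
        have hyeq : φ y = m := by
          rw [hS, Finset.mem_filter] at hy
          push_neg at hy
          exact le_antisymm (hy (Finset.mem_univ y)) (hmle y)
        rw [hψ]; simp only [chi, if_neg hy]; rw [hyeq]; ring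
      have hψmz : ∑ y, pi y * ψ y = 0 := by
        have h1 : ∀ y, pi y * ψ y = pi y * φ y - t * (pi y * chi pi S y) := by
          intro y; rw [hψ]; ring
        rw [Finset.sum_congr rfl fun y _ => h1 y, Finset.sum_sub_distrib, hmz,
          ← Finset.mul_sum, chi_meanzero hpi1, mul_zero, sub_self]
      have himg : (Finset.image ψ Finset.univ).card ≤ n := by
        have hsub : Finset.image ψ Finset.univ ⊆
            ((Finset.image φ Finset.univ).erase m).image
              (fun v => v - t + t * meas pi S) := by
          intro v hv
          obtain ⟨y, _, rfl⟩ := Finset.mem_image.mp hv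
          by_cases hy : y ∈ S
          · refine Finset.mem_image.mpr ⟨φ y, ?_, ?_⟩
            · exact Finset.mem_erase.mpr ⟨ne_of_gt (Finset.mem_filter.mp hy).2,
                Finset.mem_image_of_mem φ (Finset.mem_univ y)⟩
            · rw [hψmem y hy]
          · refine Finset.mem_image.mpr ⟨m', ?_, ?_⟩
            · refine Finset.mem_erase.mpr ⟨by rw [ht] at htpos; intro h; rw [h] at htpos; linarith, ?_⟩
              exact hy' ▸ Finset.mem_image_of_mem φ (Finset.mem_univ y')
            · rw [hψnot y hy, ht]; ring
        calc (Finset.image ψ Finset.univ).card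
            ≤ (((Finset.image φ Finset.univ).erase m).image
                (fun v => v - t + t * meas pi S)).card := Finset.card_le_card hsub
          _ ≤ ((Finset.image φ Finset.univ).erase m).card := Finset.card_image_le
          _ = (Finset.image φ Finset.univ).card - 1 := Finset.card_erase_of_mem hmmem
          _ ≤ n := by omega
      obtain ⟨c', hc'0, hc'rep, hc'w⟩ := ih ψ himg hψmz
      have hsplit : ∀ g : Finset V → ℝ,
          ∑ B : Finset V, (c' B + (if B = S then t else 0)) * g B
            = (∑ B : Finset V, c' B * g B) + t * g S := by
        intro g
        rw [Finset.sum_congr rfl (fun B _ => by rw [add_mul]), Finset.sum_add_distrib]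
        congr 1
        rw [Finset.sum_eq_single S]
        · rw [if_pos rfl]
        · intro B _ hB; rw [if_neg hB, zero_mul]
        · intro h; exact absurd (Finset.mem_univ S) h
      refine ⟨fun B => c' B + (if B = S then t else 0), ?_, ?_, ?_⟩
      · intro B
        show 0 ≤ c' B + (if B = S then t else 0)
        have := hc'0 B
        by_cases hB : B = S
        · rw [if_pos hB]; linarith
        · rw [if_neg hB]; linarith
      · intro y
        rw [hsplit (fun B => chi pi B y), ← hc'rep y, hψ]
        ring
      · rw [hsplit (fun B => fhat f (meas pi B))]
        obtain ⟨y₁, _, hy₁⟩ := Finset.exists_mem_eq_sup' Finset.univ_nonempty φ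
        have hy₁Mx : φ y₁ = Mx := hy₁.symm
        have hMxgt : m < Mx := by
          by_contra hc
          push_neg at hc
          obtain ⟨ys, hysS⟩ := hSne
          have := (Finset.mem_filter.mp hysS).2
          have := hMge ys
          linarith
        have hy₁S : y₁ ∈ S := by
          rw [hS, Finset.mem_filter]
          exact ⟨Finset.mem_univ y₁, by rw [hy₁Mx]; exact hMxgt⟩
        have hinfψ : Finset.univ.inf' Finset.univ_nonempty ψ = m + t * meas pi S := by
          apply le_antisymm
          · exact (hψnot y₀ hy₀S) ▸ Finset.inf'_le _ (Finset.mem_univ y₀)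
          · apply Finset.le_inf'
            intro y _
            by_cases hy : y ∈ S
            · rw [hψmem y hy]
              have := hm'le y hy
              rw [ht]
              linarith
            · rw [hψnot y hy]
        have hsupψ : Finset.univ.sup' Finset.univ_nonempty ψ = Mx - t + t * meas pi S := by
          apply le_antisymm
          · apply Finset.sup'_le
            intro y _
            by_cases hy : y ∈ S
            · rw [hψmem y hy]
              have := hMge y
              linarith
            · rw [hψnot y hy]
              have : m' ≤ Mx := hy' ▸ hMge y'
              rw [ht]
              linarith
          · have hval : ψ y₁ = Mx - t + t * meas pi S := by
              rw [hψmem y₁ hy₁S, hy₁Mx]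
            exact hval ▸ Finset.le_sup' _ (Finset.mem_univ y₁)
        rw [hinfψ, hsupψ] at hc'w
        have hfS : fhat f (meas pi S) ≤ Fmax := hFmax S
        have h2 : t * fhat f (meas pi S) ≤ t * Fmax :=
          mul_le_mul_of_nonneg_left hfS htpos.le
        have h3 : Fmax * (Mx - t + t * meas pi S - (m + t * meas pi S)) + t * Fmax
            = Fmax * (Mx - m) := by ring
        linarith

lemma rep_exists [Nonempty V] (hpi1 : ∑ x, pi x = 1)
    {Fmax : ℝ} (hFmax : ∀ B : Finset V, fhat f (meas pi B) ≤ Fmax)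
    (φ : V → ℝ) (hmz : ∑ y, pi y * φ y = 0) :
    ∃ c : Finset V → ℝ, (∀ B, 0 ≤ c B) ∧ (∀ y, φ y = ∑ B : Finset V, c B * chi pi B y) ∧
      ∑ B : Finset V, c B * fhat f (meas pi B)
        ≤ Fmax * (Finset.univ.sup' Finset.univ_nonempty φ
          - Finset.univ.inf' Finset.univ_nonempty φ) :=
  rep_exists_aux hpi1 hFmax (Finset.image φ Finset.univ).card φ le_rfl hmz

end repexists


section NNsec
variable {P : V → V → ℝ} {pi : V → ℝ} {f : ℝ → ℝ}

/-- set of weights of nonnegative `chi`-representations of `φ`. -/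
def repSet (pi : V → ℝ) (f : ℝ → ℝ) (φ : V → ℝ) : Set ℝ :=
  {w | ∃ c : Finset V → ℝ, (∀ B, 0 ≤ c B) ∧
    (∀ y, φ y = ∑ B : Finset V, c B * chi pi B y) ∧
    w = ∑ B : Finset V, c B * fhat f (meas pi B)}

/-- the gauge seminorm given by minimal representation weight. -/
def NN (pi : V → ℝ) (f : ℝ → ℝ) (φ : V → ℝ) : ℝ := sInf (repSet pi f φ)

lemma repSet_nonneg (hf : ∀ a : ℝ, 0 < a → a ≤ 1 / 2 → 0 < f a ∧ f a ≤ f (1 - a))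
    {φ : V → ℝ} {w : ℝ} (hw : w ∈ repSet pi f φ) : 0 ≤ w := by
  obtain ⟨c, h0, _, rfl⟩ := hw
  exact Finset.sum_nonneg fun B _ => mul_nonneg (h0 B) (fhat_nonneg hf _)

lemma repSet_bddBelow (hf : ∀ a : ℝ, 0 < a → a ≤ 1 / 2 → 0 < f a ∧ f a ≤ f (1 - a))
    (φ : V → ℝ) : BddBelow (repSet pi f φ) :=
  ⟨0, fun _ hw => repSet_nonneg hf hw⟩

lemma NN_le (hf : ∀ a : ℝ, 0 < a → a ≤ 1 / 2 → 0 < f a ∧ f a ≤ f (1 - a))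
    {φ : V → ℝ} {w : ℝ} (hw : w ∈ repSet pi f φ) : NN pi f φ ≤ w :=
  csInf_le (repSet_bddBelow hf φ) hw

lemma le_mul_csInf {s : Set ℝ} {a r : ℝ} (hs : s.Nonempty) (hr : 0 ≤ r)
    (h : ∀ w ∈ s, a ≤ r * w) : a ≤ r * sInf s := by
  rcases eq_or_lt_of_le hr with hr0 | hrpos
  · obtain ⟨w, hw⟩ := hs
    have := h w hw
    rw [← hr0] at this ⊢
    simpa using this
  · apply le_of_forall_pos_le_add
    intro ε hε
    obtain ⟨w, hws, hw⟩ := Real.lt_sInf_add_pos hs (show 0 < ε / r by positivity)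
    calc a ≤ r * w := h w hws
      _ ≤ r * (sInf s + ε / r) := mul_le_mul_of_nonneg_left hw.le hrpos.le
      _ = r * sInf s + ε := by field_simp
  
lemma weight_lower (hpi0 : ∀ x, 0 < pi x) (hpi1 : ∑ x, pi x = 1)
    (hf : ∀ a : ℝ, 0 < a → a ≤ 1 / 2 → 0 < f a ∧ f a ≤ f (1 - a))
    {fmin : ℝ} (hfmin0 : 0 ≤ fmin)
    (hfmin : ∀ B : Finset V, B ≠ ∅ → B ≠ Finset.univ → fmin ≤ fhat f (meas pi B))
    {φ : V → ℝ} (x : V) : ∀ w ∈ repSet pi f φ, fmin * φ x ≤ w := by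
  rintro w ⟨c, h0, hrep, rfl⟩
  have hterm : ∀ B : Finset V, c B * (fmin * chi pi B x) ≤ c B * fhat f (meas pi B) := by
    intro B
    by_cases hB : B = ∅
    · subst hB
      rw [chi_empty, mul_zero, mul_zero]
      exact mul_nonneg (h0 _) (fhat_nonneg hf _)
    by_cases hBu : B = Finset.univ
    · subst hBu
      rw [chi_univ hpi1, mul_zero, mul_zero]
      exact mul_nonneg (h0 _) (fhat_nonneg hf _)
    apply mul_le_mul_of_nonneg_left _ (h0 B)
    calc fmin * chi pi B x ≤ fmin * 1 :=
        mul_le_mul_of_nonneg_left (chi_le_one hpi0 B x) hfmin0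
      _ = fmin := mul_one _
      _ ≤ fhat f (meas pi B) := hfmin B hB hBu
  calc fmin * φ x = ∑ B : Finset V, c B * (fmin * chi pi B x) := by
        rw [hrep x, Finset.mul_sum]
        exact Finset.sum_congr rfl fun B _ => by ring
    _ ≤ ∑ B : Finset V, c B * fhat f (meas pi B) := Finset.sum_le_sum fun B _ => hterm B

lemma repSet_Pact (hP0 : ∀ x y, 0 ≤ P x y) (hpi0 : ∀ x, 0 < pi x)
    (hpi1 : ∑ x, pi x = 1) (hP1 : ∀ x, ∑ y, P x y = 1)
    (hstat : ∀ y, ∑ x, pi x * P x y = pi y)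
    (hf0 : ∀ a ∈ Set.Icc (0:ℝ) 1, 0 ≤ f a)
    (hf : ∀ a : ℝ, 0 < a → a ≤ 1 / 2 → 0 < f a ∧ f a ≤ f (1 - a))
    {φ : V → ℝ} {w : ℝ} (hw : w ∈ repSet pi f φ) :
    ∃ w' ∈ repSet pi f (Pact P pi φ), w' ≤ fCongMax f P pi * w := by
  obtain ⟨c, h0, hrep, rfl⟩ := hw
  set c2 : Finset V → ℝ := fun T => ∑ B : Finset V, c B * dweight P pi B T with hc2
  have hc20 : ∀ T, 0 ≤ c2 T := fun T =>
    Finset.sum_nonneg fun B _ => mul_nonneg (h0 B) (dweight_nonneg B T)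
  refine ⟨∑ T : Finset V, c2 T * fhat f (meas pi T), ⟨c2, hc20, ?_, rfl⟩, ?_⟩
  · intro y
    have step1 : Pact P pi φ y = ∑ B : Finset V, c B * (qf P pi B y - meas pi B) := by
      unfold Pact
      have hnum : ∑ x, pi x * P x y * φ x
          = ∑ B : Finset V, c B * (∑ x, pi x * P x y * chi pi B x) := by
        rw [Finset.sum_congr rfl (fun x _ => by
          rw [hrep x, Finset.mul_sum])]
        rw [Finset.sum_comm]
        exact Finset.sum_congr rfl fun B _ => by
          rw [Finset.mul_sum]
          exact Finset.sum_congr rfl fun x _ => by ring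
      rw [hnum, Finset.sum_div]
      exact Finset.sum_congr rfl fun B _ => by
        rw [mul_div_assoc, ← Pact_chi hpi0 hstat B y]
        rfl

    rw [step1]
    have step2 : ∀ B : Finset V, c B * (qf P pi B y - meas pi B)
        = ∑ T : Finset V, c B * (dweight P pi B T * chi pi T y) := by
      intro B
      rw [← Finset.mul_sum, sum_dweight_chi hP0 hpi0 hP1 hstat B y]
    rw [Finset.sum_congr rfl fun B _ => step2 B, Finset.sum_comm]
    exact Finset.sum_congr rfl fun T _ => by
      rw [hc2, Finset.sum_mul]
      exact Finset.sum_congr rfl fun B _ => by ring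
  · have hswap : ∑ T : Finset V, c2 T * fhat f (meas pi T)
        = ∑ B : Finset V, c B * (∑ T : Finset V, dweight P pi B T * fhat f (meas pi T)) := by
      rw [Finset.sum_congr rfl (fun T (_ : T ∈ Finset.univ) => by
        rw [hc2, Finset.sum_mul])]
      rw [Finset.sum_comm]
      exact Finset.sum_congr rfl fun B _ => by
        rw [Finset.mul_sum]
        exact Finset.sum_congr rfl fun T _ => by ring
    rw [hswap, Finset.mul_sum]
    apply Finset.sum_le_sum
    intro B _
    rw [sum_dweight_fhat hpi0 B]
    calc c B * ∫ u in (0:ℝ)..1, fhat f (meas pi (evolve P pi B u))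
        ≤ c B * (fCongMax f P pi * fhat f (meas pi B)) :=
          mul_le_mul_of_nonneg_left
            (key_contraction hP0 hpi0 hpi1 hstat hP1 hf0 hf B) (h0 B)
      _ = fCongMax f P pi * (c B * fhat f (meas pi B)) := by ring

lemma NN_Pact_le (hP0 : ∀ x y, 0 ≤ P x y) (hpi0 : ∀ x, 0 < pi x)
    (hpi1 : ∑ x, pi x = 1) (hP1 : ∀ x, ∑ y, P x y = 1)
    (hstat : ∀ y, ∑ x, pi x * P x y = pi y)
    (hf0 : ∀ a ∈ Set.Icc (0:ℝ) 1, 0 ≤ f a)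
    (hf : ∀ a : ℝ, 0 < a → a ≤ 1 / 2 → 0 < f a ∧ f a ≤ f (1 - a))
    (hC0 : 0 ≤ fCongMax f P pi)
    {φ : V → ℝ} (hne : (repSet pi f φ).Nonempty) :
    NN pi f (Pact P pi φ) ≤ fCongMax f P pi * NN pi f φ := by
  apply le_mul_csInf hne hC0
  intro w hw
  obtain ⟨w', hw', hle⟩ := repSet_Pact hP0 hpi0 hpi1 hP1 hstat hf0 hf hw
  exact (NN_le hf hw').trans hle

lemma repSet_smul {φ : V → ℝ} {w : ℝ} {r : ℝ} (hr : 0 ≤ r) (hw : w ∈ repSet pi f φ) :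
    r * w ∈ repSet pi f (fun y => r * φ y) := by
  obtain ⟨c, h0, hrep, rfl⟩ := hw
  refine ⟨fun B => r * c B, fun B => mul_nonneg hr (h0 B), ?_, ?_⟩
  · intro y
    show r * φ y = ∑ B : Finset V, r * c B * chi pi B y
    rw [hrep y, Finset.mul_sum]
    exact Finset.sum_congr rfl fun B _ => by ring
  · show r * (∑ B : Finset V, c B * fhat f (meas pi B))
      = ∑ B : Finset V, r * c B * fhat f (meas pi B)
    rw [Finset.mul_sum]
    exact Finset.sum_congr rfl fun B _ => by ring

lemma NN_smul (hf : ∀ a : ℝ, 0 < a → a ≤ 1 / 2 → 0 < f a ∧ f a ≤ f (1 - a))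
    {φ : V → ℝ} (hne : (repSet pi f φ).Nonempty) {r : ℝ} (hr : 0 < r) :
    NN pi f (fun y => r * φ y) = r * NN pi f φ := by
  apply le_antisymm
  · apply le_mul_csInf hne hr.le
    intro w hw
    exact NN_le hf (repSet_smul hr.le hw)
  · obtain ⟨w0, hw0⟩ := hne
    have hne' : (repSet pi f (fun y => r * φ y)).Nonempty := ⟨r * w0, repSet_smul hr.le hw0⟩
    apply le_csInf hne'
    intro w' hw'
    obtain ⟨c, h0, hrep, rfl⟩ := hw'
    have hmem : (1/r) * ∑ B : Finset V, c B * fhat f (meas pi B) ∈ repSet pi f φ := by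
      refine ⟨fun B => (1/r) * c B, fun B => mul_nonneg (by positivity) (h0 B), ?_, ?_⟩
      · intro y
        show φ y = ∑ B : Finset V, (1/r) * c B * chi pi B y
        have h3 : r * φ y = ∑ B : Finset V, c B * chi pi B y := hrep y
        have h2 : φ y = (1/r) * (r * φ y) := by field_simp
        rw [h2, h3, Finset.mul_sum]
        exact Finset.sum_congr rfl fun B _ => by ring
      · show (1/r) * (∑ B : Finset V, c B * fhat f (meas pi B))
          = ∑ B : Finset V, (1/r) * c B * fhat f (meas pi B)
        rw [Finset.mul_sum]
        exact Finset.sum_congr rfl fun B _ => by ring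
    have := NN_le hf hmem
    calc r * NN pi f φ ≤ r * ((1/r) * ∑ B : Finset V, c B * fhat f (meas pi B)) :=
        mul_le_mul_of_nonneg_left this hr.le
      _ = ∑ B : Finset V, c B * fhat f (meas pi B) := by field_simp

end NNsec


section eigen

lemma exists_reversed_eigvec (P : V → V → ℝ) (pi : V → ℝ) (hpi0 : ∀ x, 0 < pi x)
    (lam : ℂ) (hev : ∃ g : V → ℂ, g ≠ 0 ∧ ∀ x, ∑ y, (P x y : ℂ) * g y = lam * g x) :
    ∃ h : V → ℂ, h ≠ 0 ∧
      ∀ y, ∑ x, (pi x : ℂ) * (P x y : ℂ) * h x = lam * ((pi y : ℂ) * h y) := by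
  classical
  obtain ⟨g, hg0, hgev⟩ := hev
  set A : Matrix V V ℂ := Matrix.of (fun x y => (P x y : ℂ)) with hA
  have hmv : ∀ (M : Matrix V V ℂ) (v : V → ℂ) (x : V),
      (M - lam • 1).mulVec v x = (∑ y, M x y * v y) - lam * v x := by
    intro M v x
    rw [Matrix.mulVec, dotProduct]
    rw [Finset.sum_congr rfl (fun y (_ : y ∈ Finset.univ) => by
      rw [Matrix.sub_apply, Matrix.smul_apply, Matrix.one_apply, sub_mul,
        smul_eq_mul, mul_assoc])]
    rw [Finset.sum_sub_distrib]
    congr 1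
    rw [Finset.sum_eq_single x]
    · rw [if_pos rfl, one_mul]
    · intro y _ hy; rw [if_neg (Ne.symm hy), zero_mul, mul_zero]
    · intro hx; exact absurd (Finset.mem_univ x) hx
  have hdet : (A - lam • 1).det = 0 := by
    rw [← Matrix.exists_mulVec_eq_zero_iff]
    refine ⟨g, hg0, ?_⟩
    funext x
    rw [hmv A g x]
    have := hgev x
    rw [Pi.zero_apply]
    rw [show ∑ y, A x y * g y = ∑ y, (P x y : ℂ) * g y from rfl, this]
    ring
  have hdetT : (A.transpose - lam • 1).det = 0 := by
    have heq : A.transpose - lam • 1 = (A - lam • 1).transpose := by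
      rw [Matrix.transpose_sub, Matrix.transpose_smul, Matrix.transpose_one]
    rw [heq, Matrix.det_transpose]
    exact hdet
  obtain ⟨v, hv0, hv⟩ := (Matrix.exists_mulVec_eq_zero_iff).mpr hdetT
  have hvev : ∀ y, ∑ x, (P x y : ℂ) * v x = lam * v y := by
    intro y
    have := congrFun hv y
    rw [hmv A.transpose v y, Pi.zero_apply] at this
    have h2 : ∑ x, A.transpose y x * v x = ∑ x, (P x y : ℂ) * v x := rfl
    rw [h2] at this
    linear_combination this
  refine ⟨fun x => v x / (pi x : ℂ), ?_, ?_⟩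
  · intro hcon
    apply hv0
    funext x
    have := congrFun hcon x
    simp only [Pi.zero_apply] at this ⊢
    have hpix : (pi x : ℂ) ≠ 0 := by
      exact_mod_cast ne_of_gt (hpi0 x)
    field_simp at this
    simpa using this
  · intro y
    have hterm : ∀ x, (pi x : ℂ) * (P x y : ℂ) * (v x / (pi x : ℂ)) = (P x y : ℂ) * v x := by
      intro x
      have hpix : (pi x : ℂ) ≠ 0 := by exact_mod_cast ne_of_gt (hpi0 x)
      field_simp
    rw [Finset.sum_congr rfl fun x _ => hterm x, hvev y]
    have hpiy : (pi y : ℂ) ≠ 0 := by exact_mod_cast ne_of_gt (hpi0 y)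
    field_simp

end eigen


/-- Every complex eigenvalue `λ ≠ 1` of a finite irreducible Markov chain
satisfies `|λ| ≤ C_f`, for `f` nonnegative on `[0,1]` with
`0 < f(a) ≤ f(1−a)` on `(0,1/2]`. -/
theorem stmt9 {V : Type*} [Fintype V] [Nonempty V] (P : V → V → ℝ) (pi : V → ℝ)
    (hP0 : ∀ x y, 0 ≤ P x y) (hP1 : ∀ x, ∑ y, P x y = 1)
    (hirr : ∀ x y : V, ∃ t : ℕ, 0 < (Matrix.of P ^ t) x y)
    (hpi0 : ∀ x, 0 < pi x) (hpi1 : ∑ x, pi x = 1)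
    (hstat : ∀ y, ∑ x, pi x * P x y = pi y)
    (f : ℝ → ℝ) (hf0 : ∀ a ∈ Set.Icc (0:ℝ) 1, 0 ≤ f a)
    (hf : ∀ a : ℝ, 0 < a → a ≤ 1 / 2 → 0 < f a ∧ f a ≤ f (1 - a))
    (lam : ℂ) (hlam : lam ≠ 1)
    (hev : ∃ g : V → ℂ, g ≠ 0 ∧ ∀ x, ∑ y, (P x y : ℂ) * g y = lam * g x) :
    ‖lam‖ ≤ fCongMax f P pi := by
  classical
  by_cases hcard : Fintype.card V ≤ 1
  · exfalso
    obtain ⟨g, hg0, hgev⟩ := hev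
    have hx : ∃ x, g x ≠ 0 := by
      by_contra hc
      push_neg at hc
      exact hg0 (funext fun x => hc x)
    obtain ⟨x₀, hx₀⟩ := hx
    have hsingle : ∀ y : V, y = x₀ := fun y => Fintype.card_le_one_iff.mp hcard y x₀
    have hsum : ∑ y, (P x₀ y : ℂ) * g y = (P x₀ x₀ : ℂ) * g x₀ := by
      rw [Finset.sum_eq_single x₀]
      · intro b _ hb; exact absurd (hsingle b) hb
      · intro hb; exact absurd (Finset.mem_univ x₀) hb
    have hP11 : P x₀ x₀ = 1 := by
      have := hP1 x₀
      rwa [Finset.sum_eq_single x₀ (fun b _ hb => absurd (hsingle b) hb)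
        (fun hb => absurd (Finset.mem_univ x₀) hb)] at this
    have heq := hgev x₀
    rw [hsum, hP11] at heq
    push_cast at heq
    rw [one_mul] at heq
    apply hlam
    have h2 : (lam - 1) * g x₀ = 0 := by linear_combination -heq
    rcases mul_eq_zero.mp h2 with h3 | h3
    · exact sub_eq_zero.mp h3
    · exact absurd h3 hx₀
  · push_neg at hcard
    obtain ⟨xa, xb, hab⟩ := Fintype.exists_pair_of_one_lt_card hcard
    have hpair : pi xa + pi xb ≤ 1 := by
      have h := meas_le_one hpi0 hpi1 ({xa, xb} : Finset V)
      rwa [meas, Finset.sum_pair hab] at h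
    have hx₁ : ∃ x : V, pi x ≤ 1/2 := by
      by_cases hcc : pi xa ≤ 1/2
      · exact ⟨xa, hcc⟩
      · push_neg at hcc; exact ⟨xb, by linarith⟩
    obtain ⟨x₁, hx₁⟩ := hx₁
    have hbdd := bddAbove_congSet (f := f) hP0 hpi0 hpi1 hf
    have hmx₁ : meas pi {x₁} ≤ 1/2 := by rwa [meas, Finset.sum_singleton]
    have hC0 : 0 ≤ fCongMax f P pi := by
      have hmem : fCong f P pi {x₁} ∈
          {c | ∃ A : Finset V, A.Nonempty ∧ meas pi A ≤ 1 / 2 ∧ c = fCong f P pi A} :=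
        ⟨{x₁}, Finset.singleton_nonempty _, hmx₁, rfl⟩
      have h1 : 0 ≤ fCong f P pi {x₁} := by
        apply div_nonneg
        · apply intervalIntegral.integral_nonneg zero_le_one
          intro u _
          exact hf0 _ ⟨meas_nonneg hpi0 _, meas_le_one hpi0 hpi1 _⟩
        · exact (hf _ (meas_pos hpi0 (Finset.singleton_nonempty _)) hmx₁).1.le
      exact le_trans h1 (le_csSup hbdd hmem)
    by_cases hlam0 : lam = 0
    · rw [hlam0]; simpa using hC0
    have hlampos : 0 < ‖lam‖ := norm_pos_iff.mpr hlam0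
    obtain ⟨h, hh0, hhev⟩ := exists_reversed_eigvec P pi hpi0 lam hev
    have hPsum : ∀ x : V, ∑ y, (P x y : ℂ) = 1 := by
      intro x
      exact_mod_cast hP1 x
    have hmz : ∑ y, (pi y : ℂ) * h y = 0 := by
      have hsum : lam * ∑ y, (pi y : ℂ) * h y = ∑ y, (pi y : ℂ) * h y := by
        rw [Finset.mul_sum]
        rw [Finset.sum_congr rfl (fun y (_ : y ∈ Finset.univ) => (hhev y).symm)]
        rw [Finset.sum_comm]
        refine Finset.sum_congr rfl fun x _ => ?_
        calc ∑ y, (pi x:ℂ) * (P x y:ℂ) * h x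
            = ((pi x:ℂ) * h x) * ∑ y, (P x y:ℂ) := by
              rw [Finset.mul_sum]
              exact Finset.sum_congr rfl fun y _ => by ring
          _ = (pi x:ℂ) * h x := by rw [hPsum x, mul_one]
      have h2 : (lam - 1) * ∑ y, (pi y:ℂ) * h y = 0 := by linear_combination hsum
      rcases mul_eq_zero.mp h2 with h3 | h3
      · exact absurd (sub_eq_zero.mp h3) hlam
      · exact h3
    set Fmax : ℝ := max ((Finset.univ : Finset (Finset V)).sup'
      ⟨∅, Finset.mem_univ ∅⟩ (fun B => fhat f (meas pi B))) 0 with hFm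
    have hFmax : ∀ B : Finset V, fhat f (meas pi B) ≤ Fmax := fun B =>
      le_max_of_le_left
        (Finset.le_sup' (fun B => fhat f (meas pi B)) (Finset.mem_univ B))
    set T' : Finset (Finset V) :=
      Finset.univ.filter (fun B : Finset V => B ≠ ∅ ∧ B ≠ Finset.univ) with hT'
    have hx₁univ : ({x₁} : Finset V) ≠ Finset.univ := by
      intro hc
      have : Fintype.card V = 1 := by rw [← Finset.card_univ, ← hc, Finset.card_singleton]
      omega
    have hT'ne : T'.Nonempty := ⟨{x₁}, by
      rw [hT', Finset.mem_filter]
      exact ⟨Finset.mem_univ _, Finset.singleton_ne_empty _, hx₁univ⟩⟩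
    set fmin : ℝ := T'.inf' hT'ne (fun B => fhat f (meas pi B)) with hfm
    have hfminpos : 0 < fmin := by
      rw [hfm, Finset.lt_inf'_iff]
      intro B hB
      rw [hT', Finset.mem_filter] at hB
      exact fhat_pos hf (meas_pos hpi0 (Finset.nonempty_of_ne_empty hB.2.1))
        (meas_lt_one hpi0 hpi1 hB.2.2)
    have hfmin : ∀ B : Finset V, B ≠ ∅ → B ≠ Finset.univ → fmin ≤ fhat f (meas pi B) := by
      intro B h1 h2
      rw [hfm]
      exact Finset.inf'_le _ (by rw [hT', Finset.mem_filter]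
                                 exact ⟨Finset.mem_univ _, h1, h2⟩)
    set Φ : ℂ → V → ℝ := fun z y => (z * h y).re with hΦ
    have hΦmz : ∀ z : ℂ, ∑ y, pi y * Φ z y = 0 := by
      intro z
      have hre : ∑ y, pi y * Φ z y = (z * ∑ y, (pi y:ℂ) * h y).re := by
        rw [Finset.mul_sum, Complex.re_sum]
        refine Finset.sum_congr rfl fun y _ => ?_
        rw [show z * ((pi y:ℂ) * h y) = (pi y :ℂ) * (z * h y) by ring]
        rw [Complex.re_ofReal_mul]
      rw [hre, hmz, mul_zero, Complex.zero_re]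
    have hΦrep : ∀ z : ℂ, (repSet pi f (Φ z)).Nonempty := by
      intro z
      obtain ⟨c, h0, hrep, _⟩ := rep_exists hpi1 hFmax (Φ z) (hΦmz z)
      exact ⟨_, c, h0, hrep, rfl⟩
    set Hmax : ℝ := Finset.univ.sup' Finset.univ_nonempty
      (fun y => ‖h y‖) with hHm
    have hNNub : ∀ z : ℂ, ‖z‖ = 1 → NN pi f (Φ z) ≤ Fmax * (2 * Hmax) := by
      intro z hz
      obtain ⟨c, h0, hrep, hwt⟩ := rep_exists hpi1 hFmax (Φ z) (hΦmz z)
      refine le_trans (NN_le hf ⟨c, h0, hrep, rfl⟩) (le_trans hwt ?_)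
      have habs : ∀ y, |Φ z y| ≤ Hmax := by
        intro y
        calc |Φ z y| = |(z * h y).re| := rfl
          _ ≤ ‖z * h y‖ := Complex.abs_re_le_norm _
          _ = ‖z‖ * ‖h y‖ := norm_mul _ _
          _ = ‖h y‖ := by rw [hz, one_mul]
          _ ≤ Hmax := Finset.le_sup' (fun y => ‖h y‖) (Finset.mem_univ y)
      have h1 : Finset.univ.sup' Finset.univ_nonempty (Φ z) ≤ Hmax :=
        Finset.sup'_le _ _ fun y _ => le_trans (le_abs_self _) (habs y)
      have h2 : -Hmax ≤ Finset.univ.inf' Finset.univ_nonempty (Φ z) :=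
        Finset.le_inf' _ _ fun y _ => by linarith [abs_le.mp (habs y)]
      have hFmax0 : 0 ≤ Fmax := le_max_right _ _
      have h3 : Finset.univ.sup' Finset.univ_nonempty (Φ z)
          - Finset.univ.inf' Finset.univ_nonempty (Φ z) ≤ 2 * Hmax := by linarith
      exact mul_le_mul_of_nonneg_left h3 hFmax0
    set μ : ℂ := lam / (‖lam‖ : ℂ) with hμ
    have hμ1 : ‖μ‖ = 1 := by
      rw [hμ, norm_div, Complex.norm_real, Real.norm_eq_abs, abs_of_pos hlampos,
        div_self (ne_of_gt hlampos)]
    have hμ0 : μ ≠ 0 := by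
      intro hc; rw [hc] at hμ1; simp at hμ1
    have hlamC : ((‖lam‖ : ℝ) : ℂ) ≠ 0 := by
      exact_mod_cast ne_of_gt hlampos
    have hlamdecomp : lam = μ * (‖lam‖ : ℂ) := by
      rw [hμ]; field_simp
    have hPact : ∀ z : ℂ, Pact P pi (Φ z) = fun y => ‖lam‖ * Φ (z * μ) y := by
      intro z
      funext y
      rw [Pact]
      have hnum : ∑ x, pi x * P x y * Φ z x
          = pi y * (‖lam‖ * Φ (z * μ) y) := by
        have hterm : ∀ x, pi x * P x y * Φ z x
            = (((pi x * P x y : ℝ) : ℂ) * (z * h x)).re := by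
          intro x
          rw [Complex.re_ofReal_mul]
        rw [Finset.sum_congr rfl fun x _ => hterm x, ← Complex.re_sum]
        have hs : (∑ x, ((pi x * P x y : ℝ) : ℂ) * (z * h x))
            = z * ∑ x, (pi x:ℂ) * (P x y:ℂ) * h x := by
          rw [Finset.mul_sum]
          refine Finset.sum_congr rfl fun x _ => ?_
          push_cast
          ring
        rw [hs, hhev y]
        have hz2 : z * (lam * ((pi y:ℂ) * h y))
            = ((pi y : ℝ) : ℂ) * (((‖lam‖ : ℝ) : ℂ) * ((z * μ) * h y)) := by
          rw [hμ]
          field_simp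
        rw [hz2, Complex.re_ofReal_mul, Complex.re_ofReal_mul]
      rw [hnum, mul_div_cancel_left₀ _ (ne_of_gt (hpi0 y))]
    have hkey : ∀ z : ℂ, ‖lam‖ * NN pi f (Φ (z * μ))
        ≤ fCongMax f P pi * NN pi f (Φ z) := by
      intro z
      have h1 := NN_Pact_le hP0 hpi0 hpi1 hP1 hstat hf0 hf hC0 (hΦrep z)
      rw [hPact z] at h1
      rwa [NN_smul hf (hΦrep (z * μ)) hlampos] at h1
    set MS : Set ℝ := (fun z => NN pi f (Φ z)) '' {z : ℂ | ‖z‖ = 1} with hMS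
    have hMSne : MS.Nonempty := ⟨NN pi f (Φ 1), 1, by simp, rfl⟩
    have hMSbdd : BddAbove MS := by
      refine ⟨Fmax * (2 * Hmax), ?_⟩
      rintro w ⟨z, hz, rfl⟩
      exact hNNub z hz
    set M : ℝ := sSup MS with hM
    have hy₀ : ∃ y, h y ≠ 0 := by
      by_contra hc; push_neg at hc; exact hh0 (funext fun y => hc y)
    obtain ⟨y₀, hy₀⟩ := hy₀
    have habsy₀ : 0 < ‖h y₀‖ := norm_pos_iff.mpr hy₀
    set z₀ : ℂ := (starRingEnd ℂ) (h y₀) / (‖h y₀‖ : ℂ) with hz₀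
    have hz₀1 : ‖z₀‖ = 1 := by
      rw [hz₀, norm_div, Complex.norm_conj, Complex.norm_real, Real.norm_eq_abs, abs_of_pos habsy₀,
        div_self (ne_of_gt habsy₀)]
    have hΦz₀ : Φ z₀ y₀ = ‖h y₀‖ := by
      have hmul : z₀ * h y₀ = ((‖h y₀‖ : ℝ) : ℂ) := by
        rw [hz₀, div_mul_eq_mul_div]
        rw [show (starRingEnd ℂ) (h y₀) * h y₀
            = (((‖h y₀‖)^2 : ℝ) : ℂ) by
          rw [mul_comm, Complex.mul_conj]
          norm_cast
          exact (Complex.sq_norm _).symm]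
        rw [show (((‖h y₀‖)^2 : ℝ) : ℂ)
            = ((‖h y₀‖ : ℝ):ℂ) * ((‖h y₀‖ : ℝ):ℂ) by
          push_cast; ring]
        rw [mul_div_assoc, div_self (by exact_mod_cast ne_of_gt habsy₀), mul_one]
      show (z₀ * h y₀).re = ‖h y₀‖
      rw [hmul, Complex.ofReal_re]
    have hMpos : 0 < M := by
      have h1 : fmin * ‖h y₀‖ ≤ NN pi f (Φ z₀) := by
        rw [← hΦz₀]
        exact le_csInf (hΦrep z₀) (weight_lower hpi0 hpi1 hf hfminpos.le hfmin y₀)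
      have h2 : NN pi f (Φ z₀) ≤ M := le_csSup hMSbdd ⟨z₀, hz₀1, rfl⟩
      nlinarith [mul_pos hfminpos habsy₀]
    have hall : ∀ w ∈ MS, ‖lam‖ * w ≤ fCongMax f P pi * M := by
      rintro w ⟨z, hz, rfl⟩
      have hz' : ‖z * μ⁻¹‖ = 1 := by
        rw [norm_mul, norm_inv, hμ1, hz]; norm_num
      have hk := hkey (z * μ⁻¹)
      rw [show z * μ⁻¹ * μ = z by field_simp] at hk
      refine hk.trans ?_
      exact mul_le_mul_of_nonneg_left (le_csSup hMSbdd ⟨z * μ⁻¹, hz', rfl⟩) hC0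
    have hMle : ‖lam‖ * M ≤ fCongMax f P pi * M := by
      have h1 : M ≤ fCongMax f P pi * M / ‖lam‖ := by
        apply csSup_le hMSne
        intro w hw
        rw [le_div_iff₀ hlampos]
        calc w * ‖lam‖ = ‖lam‖ * w := mul_comm _ _
          _ ≤ _ := hall w hw
      rw [le_div_iff₀ hlampos] at h1
      linarith
    have := (mul_le_mul_iff_left₀ hMpos).mp hMle
    exact this

end Stmt9
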